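/- Let α, β, γ ∈ ℂ satisfy γ = αβ and αβ(α+β) = −2. Then every formal partial derivative ∂F₁/∂xᵢ and ∂F₂/∂xᵢ (0 ≤ i ≤ 5) lies in the ℂ-linear span of the nine quadrics Q₀, Q₁, Q₂, Q₀′, Q₁′, Q₂′, Q₀″, Q₁″, Q₂″; in particular, F₁ and F₂ are singular at every common zero of the nine quadrics. -/
import Mathlib


open MvPolynomial

noncomputable section

abbrev R6 : Type := MvPolynomial (Fin 6) ℂ

def Q0 (α : ℂ) : R6 := X 0 ^ 2 + X 3 ^ 2 + C α * (X 2 * X 4 + X 5 * X 1)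
def Q1 (α : ℂ) : R6 := X 1 ^ 2 + X 4 ^ 2 + C α * (X 3 * X 5 + X 0 * X 2)
def Q2 (α : ℂ) : R6 := X 2 ^ 2 + X 5 ^ 2 + C α * (X 4 * X 0 + X 1 * X 3)
def Q0' (β : ℂ) : R6 := X 0 ^ 2 - X 3 ^ 2 + C β * (X 2 * X 4 - X 5 * X 1)
def Q1' (β : ℂ) : R6 := X 1 ^ 2 - X 4 ^ 2 + C β * (X 3 * X 5 - X 0 * X 2)
def Q2' (β : ℂ) : R6 := X 2 ^ 2 - X 5 ^ 2 + C β * (X 4 * X 0 - X 1 * X 3)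
def Q0'' (γ : ℂ) : R6 := X 0 * X 1 + X 3 * X 4 + C γ * (X 2 * X 5)
def Q1'' (γ : ℂ) : R6 := X 1 * X 2 + X 4 * X 5 + C γ * (X 3 * X 0)
def Q2'' (γ : ℂ) : R6 := X 2 * X 3 + X 5 * X 0 + C γ * (X 4 * X 1)

/-- The set of the nine quadrics. -/
def quadrics (α β γ : ℂ) : Set R6 :=
  {Q0 α, Q1 α, Q2 α, Q0' β, Q1' β, Q2' β, Q0'' γ, Q1'' γ, Q2'' γ}

/-- The cubic `F₁`. -/
def F1 (α β : ℂ) : R6 :=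
  C (2 * (α ^ 2 * β ^ 2 - α - β)) * (X 0 * X 2 * X 4)
    - C 2 * (X 0 ^ 3 + X 2 ^ 3 + X 4 ^ 3)
    + C (2 * (β - α)) * (X 1 * X 2 * X 3 + X 3 * X 4 * X 5 + X 5 * X 0 * X 1)
    + C (α * β * (β - α)) * (X 0 * X 3 ^ 2 + X 2 * X 5 ^ 2 + X 4 * X 1 ^ 2)

/-- The cubic `F₂`. -/
def F2 (α β : ℂ) : R6 :=
  C (2 * (α ^ 2 * β ^ 2 - α - β)) * (X 1 * X 3 * X 5)
    - C 2 * (X 1 ^ 3 + X 3 ^ 3 + X 5 ^ 3)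
    + C (2 * (β - α)) * (X 2 * X 3 * X 4 + X 4 * X 5 * X 0 + X 0 * X 1 * X 2)
    + C (α * β * (β - α)) * (X 1 * X 4 ^ 2 + X 3 * X 0 ^ 2 + X 5 * X 2 ^ 2)

lemma two_mem_span {S : Set R6} (c d : ℂ) {q q' : R6} (hq : q ∈ S) (hq' : q' ∈ S) :
    C c * q + C d * q' ∈ Submodule.span ℂ S := by
  rw [← smul_eq_C_mul, ← smul_eq_C_mul]
  exact Submodule.add_mem _ (Submodule.smul_mem _ _ (Submodule.subset_span hq))
    (Submodule.smul_mem _ _ (Submodule.subset_span hq'))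

lemma one_mem_span {S : Set R6} (c : ℂ) {q : R6} (hq : q ∈ S) :
    C c * q ∈ Submodule.span ℂ S := by
  rw [← smul_eq_C_mul]
  exact Submodule.smul_mem _ _ (Submodule.subset_span hq)

set_option maxHeartbeats 1000000 in
/-- If `γ = αβ` and `αβ(α+β) = −2`, then all partial derivatives of `F₁` and `F₂` lie in the
span of the nine quadrics; in particular `F₁` and `F₂` are singular at every common zero of
the nine quadrics. -/
theorem pderivs_in_span_of_quadrics (α β γ : ℂ) (hγ : γ = α * β)
    (h : α * β * (α + β) = -2) :
    (∀ i : Fin 6, pderiv i (F1 α β) ∈ Submodule.span ℂ (quadrics α β γ) ∧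
      pderiv i (F2 α β) ∈ Submodule.span ℂ (quadrics α β γ)) ∧
    ∀ p : Fin 6 → ℂ, (∀ q ∈ quadrics α β γ, eval p q = 0) →
      ∀ i : Fin 6, eval p (pderiv i (F1 α β)) = 0 ∧ eval p (pderiv i (F2 α β)) = 0 := by
  subst hγ
  set a : ℂ := (α*β*(β-α)-6)/2 with ha
  set b : ℂ := (-(α*β*(β-α))-6)/2 with hb
  set c : ℂ := 2*(β-α) with hc
  have e10 : pderiv (0 : Fin 6) (F1 α β) = C a * Q0 α + C b * Q0' β := by
    apply MvPolynomial.funext; intro x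
    simp [F1, Q0, Q0', ha, hb, pderiv_mul, pderiv_pow, pderiv_X, Pi.single_apply]
    linear_combination (((x 2 * x 4)*(α+β) + (x 1 * x 5)*(α-β))/2) * h
  have e12 : pderiv (2 : Fin 6) (F1 α β) = C a * Q2 α + C b * Q2' β := by
    apply MvPolynomial.funext; intro x
    simp [F1, Q2, Q2', ha, hb, pderiv_mul, pderiv_pow, pderiv_X, Pi.single_apply]
    linear_combination (((x 4 * x 0)*(α+β) + (x 1 * x 3)*(α-β))/2) * h
  have e14 : pderiv (4 : Fin 6) (F1 α β) = C a * Q1 α + C (-b) * Q1' β := by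
    apply MvPolynomial.funext; intro x
    simp [F1, Q1, Q1', ha, hb, pderiv_mul, pderiv_pow, pderiv_X, Pi.single_apply]
    linear_combination (((x 3 * x 5)*(α+β) + (x 0 * x 2)*(α-β))/2 + β*(x 0*x 2 - x 3*x 5)) * h
  have e11 : pderiv (1 : Fin 6) (F1 α β) = C c * Q2'' (α*β) := by
    apply MvPolynomial.funext; intro x
    simp [F1, Q2'', hc, pderiv_mul, pderiv_pow, pderiv_X, Pi.single_apply]
    ring
  have e13 : pderiv (3 : Fin 6) (F1 α β) = C c * Q1'' (α*β) := by
    apply MvPolynomial.funext; intro x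
    simp [F1, Q1'', hc, pderiv_mul, pderiv_pow, pderiv_X, Pi.single_apply]
    ring
  have e15 : pderiv (5 : Fin 6) (F1 α β) = C c * Q0'' (α*β) := by
    apply MvPolynomial.funext; intro x
    simp [F1, Q0'', hc, pderiv_mul, pderiv_pow, pderiv_X, Pi.single_apply]
    ring
  have e21 : pderiv (1 : Fin 6) (F2 α β) = C a * Q1 α + C b * Q1' β := by
    apply MvPolynomial.funext; intro x
    simp [F2, Q1, Q1', ha, hb, pderiv_mul, pderiv_pow, pderiv_X, Pi.single_apply]
    linear_combination (((x 3 * x 5)*(α+β) + (x 0 * x 2)*(α-β))/2) * h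
  have e23 : pderiv (3 : Fin 6) (F2 α β) = C a * Q0 α + C (-b) * Q0' β := by
    apply MvPolynomial.funext; intro x
    simp [F2, Q0, Q0', ha, hb, pderiv_mul, pderiv_pow, pderiv_X, Pi.single_apply]
    linear_combination (((x 2 * x 4)*(α+β) + (x 1 * x 5)*(α-β))/2 + β*(x 5*x 1 - x 2*x 4)) * h
  have e25 : pderiv (5 : Fin 6) (F2 α β) = C a * Q2 α + C (-b) * Q2' β := by
    apply MvPolynomial.funext; intro x
    simp [F2, Q2, Q2', ha, hb, pderiv_mul, pderiv_pow, pderiv_X, Pi.single_apply]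
    linear_combination (((x 4 * x 0)*(α+β) + (x 1 * x 3)*(α-β))/2 + β*(x 1*x 3 - x 0*x 4)) * h
  have e20 : pderiv (0 : Fin 6) (F2 α β) = C c * Q1'' (α*β) := by
    apply MvPolynomial.funext; intro x
    simp [F2, Q1'', hc, pderiv_mul, pderiv_pow, pderiv_X, Pi.single_apply]
    ring
  have e22 : pderiv (2 : Fin 6) (F2 α β) = C c * Q0'' (α*β) := by
    apply MvPolynomial.funext; intro x
    simp [F2, Q0'', hc, pderiv_mul, pderiv_pow, pderiv_X, Pi.single_apply]
    ring
  have e24 : pderiv (4 : Fin 6) (F2 α β) = C c * Q2'' (α*β) := by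
    apply MvPolynomial.funext; intro x
    simp [F2, Q2'', hc, pderiv_mul, pderiv_pow, pderiv_X, Pi.single_apply]
    ring
  have main : ∀ i : Fin 6, pderiv i (F1 α β) ∈ Submodule.span ℂ (quadrics α β (α*β)) ∧
      pderiv i (F2 α β) ∈ Submodule.span ℂ (quadrics α β (α*β)) := by
    intro i
    fin_cases i
    · exact ⟨e10 ▸ two_mem_span a b (by simp [quadrics]) (by simp [quadrics]),
        e20 ▸ one_mem_span c (by simp [quadrics])⟩
    · exact ⟨e11 ▸ one_mem_span c (by simp [quadrics]),
        e21 ▸ two_mem_span a b (by simp [quadrics]) (by simp [quadrics])⟩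
    · exact ⟨e12 ▸ two_mem_span a b (by simp [quadrics]) (by simp [quadrics]),
        e22 ▸ one_mem_span c (by simp [quadrics])⟩
    · exact ⟨e13 ▸ one_mem_span c (by simp [quadrics]),
        e23 ▸ two_mem_span a (-b) (by simp [quadrics]) (by simp [quadrics])⟩
    · exact ⟨e14 ▸ two_mem_span a (-b) (by simp [quadrics]) (by simp [quadrics]),
        e24 ▸ one_mem_span c (by simp [quadrics])⟩
    · exact ⟨e15 ▸ one_mem_span c (by simp [quadrics]),
        e25 ▸ two_mem_span a (-b) (by simp [quadrics]) (by simp [quadrics])⟩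
  refine ⟨main, ?_⟩
  intro p hp
  have key : ∀ r ∈ Submodule.span ℂ (quadrics α β (α*β)), eval p r = 0 := by
    intro r hr
    induction hr using Submodule.span_induction with
    | mem x hx => exact hp x hx
    | zero => simp
    | add x y _ _ hx hy => simp [hx, hy]
    | smul t x _ hx => simp [smul_eq_C_mul, hx]
  exact fun i => ⟨key _ (main i).1, key _ (main i).2⟩
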